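/- If A, B are bounded operators with [A,B] trace class, then (AB)^n − (BA)^n is trace class for every n ≥ 1, and (AB)^n − (BA)^n = [A(BA)^{n−1}, B] modulo operators of trace zero; in particular Tr((AB)^n − (BA)^n) = Tr[A(BA)^{n−1}, B]. -/

import Mathlib

open MeasureTheory

variable {H : Type} [NormedAddCommGroup H] [InnerProductSpace ℂ H]

/-- A bounded operator is trace class when its diagonal is absolutely summable
in every Hilbert basis. -/
def IsTraceClass (T : H →L[ℂ] H) : Prop :=
  ∀ (ι : Type) (e : HilbertBasis ι ℂ H),
    Summable fun i => ‖(inner ℂ (e i) (T (e i)) : ℂ)‖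

section Aux

open scoped NNReal ENNReal
noncomputable section

local notation "⟪" x ", " y "⟫" => (inner ℂ x y : ℂ)

variable [CompleteSpace H]


lemma parseval_hasSum {ι : Type} (b : HilbertBasis ι ℂ H) (x : H) :
    HasSum (fun i => ‖⟪b i, x⟫‖ ^ 2) (‖x‖ ^ 2) := by
  have h := b.hasSum_inner_mul_inner x x
  have h2 : (fun i => ⟪x, b i⟫ * ⟪b i, x⟫) = fun i => ((‖⟪b i, x⟫‖ ^ 2 : ℝ) : ℂ) := by
    funext i
    have h3 := RCLike.conj_mul (⟪b i, x⟫)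
    rw [inner_conj_symm] at h3
    rw [h3]
    norm_cast
  rw [h2, inner_self_eq_norm_sq_to_K] at h
  exact_mod_cast Complex.hasSum_iff _ _ |>.mp h |>.1.congr (fun i => rfl) |>.congr (fun _ => rfl)

lemma parseval_nn {ι : Type} (b : HilbertBasis ι ℂ H) (x : H) :
    ∑' i, (‖⟪b i, x⟫‖₊ : ℝ≥0∞) ^ 2 = (‖x‖₊ : ℝ≥0∞) ^ 2 := by
  have h : HasSum (fun i => (‖⟪b i, x⟫‖₊ ^ 2 : ℝ≥0)) (‖x‖₊ ^ 2) := by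
    rw [← NNReal.hasSum_coe]
    push_cast
    exact parseval_hasSum b x
  rw [← ENNReal.coe_pow, ← h.tsum_eq, ENNReal.coe_tsum h.summable]
  simp [ENNReal.coe_pow]

lemma summable_sq_iff {ι : Type} (v : ι → H) :
    Summable (fun i => ‖v i‖ ^ 2) ↔ ∑' i, (‖v i‖₊ : ℝ≥0∞) ^ 2 ≠ ⊤ := by
  have h1 : ∀ i, ((‖v i‖₊ ^ 2 : ℝ≥0) : ℝ) = ‖v i‖ ^ 2 := fun i => by push_cast; rfl
  rw [show (fun i => ‖v i‖ ^ 2) = fun i => ((‖v i‖₊ ^ 2 : ℝ≥0) : ℝ) from funext fun i => (h1 i).symm,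
    NNReal.summable_coe, ← ENNReal.tsum_coe_ne_top_iff_summable]
  simp [ENNReal.coe_pow]

open ContinuousLinearMap in
lemma hs_transfer {R : H →L[ℂ] H} (hR : IsSelfAdjoint R)
    {κ : Type} (f : HilbertBasis κ ℂ H) (hf : Summable fun j => ‖R (f j)‖ ^ 2)
    (X : H →L[ℂ] H) {ι : Type} (e : HilbertBasis ι ℂ H) :
    Summable fun i => ‖R (X (e i))‖ ^ 2 := by
  have hRadj : ContinuousLinearMap.adjoint R = R := hR.adjoint_eq
  rw [summable_sq_iff]
  have key : ∑' i, (‖R (X (e i))‖₊ : ℝ≥0∞) ^ 2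
      ≤ (‖ContinuousLinearMap.adjoint X‖₊ : ℝ≥0∞) ^ 2 * ∑' j, (‖R (f j)‖₊ : ℝ≥0∞) ^ 2 := by
    calc ∑' i, (‖R (X (e i))‖₊ : ℝ≥0∞) ^ 2
        = ∑' i, ∑' j, (‖⟪f j, R (X (e i))⟫‖₊ : ℝ≥0∞) ^ 2 :=
          tsum_congr fun i => (parseval_nn f _).symm
      _ = ∑' j, ∑' i, (‖⟪e i, (ContinuousLinearMap.adjoint X) (R (f j))⟫‖₊ : ℝ≥0∞) ^ 2 := by
          rw [ENNReal.tsum_comm]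
          refine tsum_congr fun j => tsum_congr fun i => ?_
          have h2 : ⟪f j, R (X (e i))⟫ = ⟪(ContinuousLinearMap.adjoint X) (R (f j)), e i⟫ := by
            rw [ContinuousLinearMap.adjoint_inner_left, ← ContinuousLinearMap.adjoint_inner_left R,
              hRadj]
          congr 1
          rw [h2, ← inner_conj_symm (e i), RCLike.nnnorm_conj]
      _ = ∑' j, (‖(ContinuousLinearMap.adjoint X) (R (f j))‖₊ : ℝ≥0∞) ^ 2 :=
          tsum_congr fun j => parseval_nn e _
      _ ≤ ∑' j, ((‖ContinuousLinearMap.adjoint X‖₊ : ℝ≥0∞) * (‖R (f j)‖₊ : ℝ≥0∞)) ^ 2 := by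
          refine ENNReal.tsum_le_tsum fun j => ?_
          gcongr
          exact_mod_cast ContinuousLinearMap.le_opNNNorm _ _
      _ = (‖ContinuousLinearMap.adjoint X‖₊ : ℝ≥0∞) ^ 2 * ∑' j, (‖R (f j)‖₊ : ℝ≥0∞) ^ 2 := by
          simp_rw [mul_pow]
          rw [ENNReal.tsum_mul_left]
  refine ne_top_of_le_ne_top ?_ key
  refine ENNReal.mul_ne_top (by simp) ?_
  exact (summable_sq_iff _).mp hf


open ContinuousLinearMap in
lemma exists_sqrt_posPart {S : H →L[ℂ] H} (hS : IsSelfAdjoint S) (hT : IsTraceClass S) :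
    ∃ R : H →L[ℂ] H, IsSelfAdjoint R ∧ R * R = cfc (fun x : ℝ => max x 0) S ∧
      ∃ (κ : Type) (f : HilbertBasis κ ℂ H), Summable fun j => ‖R (f j)‖ ^ 2 := by
  set P := cfc (fun x : ℝ => max x 0) S with hPdef
  set N := cfc (fun x : ℝ => max (-x) 0) S with hNdef
  set R := cfc (fun x : ℝ => Real.sqrt (max x 0)) S with hRdef
  have hRsa : IsSelfAdjoint R := cfc_predicate _ _
  have hPsa : IsSelfAdjoint P := cfc_predicate _ _
  have hRR : R * R = P := by
    rw [hRdef, hPdef, ← cfc_mul (fun x : ℝ => Real.sqrt (max x 0))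
      (fun x : ℝ => Real.sqrt (max x 0)) S (by fun_prop) (by fun_prop)]
    exact cfc_congr fun x _ => Real.mul_self_sqrt (le_max_right _ _)
  have hSPN : S = P - N := by
    rw [hPdef, hNdef, ← cfc_sub (fun x : ℝ => max x 0) (fun x : ℝ => max (-x) 0) S
      (by fun_prop) (by fun_prop)]
    have : cfc (fun x : ℝ => max x 0 - max (-x) 0) S = cfc (fun x : ℝ => x) S := by
      refine cfc_congr fun x _ => ?_
      simp only [max_def]; split_ifs <;> linarith
    rw [this, cfc_id' ℝ S]
  have hNP : N * P = 0 := by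
    rw [hNdef, hPdef, ← cfc_mul (fun x : ℝ => max (-x) 0) (fun x : ℝ => max x 0) S
      (by fun_prop) (by fun_prop)]
    have : cfc (fun x : ℝ => max (-x) 0 * max x 0) S = cfc (fun _ : ℝ => (0 : ℝ)) S := by
      refine cfc_congr fun x _ => ?_
      rcases le_total x 0 with hx0 | hx0
      · rw [max_eq_right hx0, mul_zero]
      · rw [max_eq_right (neg_nonpos.mpr hx0), zero_mul]
    rw [this, cfc_const_zero]
  -- the closure of the range of P
  set K := (LinearMap.range (P : H →ₗ[ℂ] H)).topologicalClosure with hKdef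
  have hPK : ∀ y : H, P y ∈ K := fun y =>
    Submodule.le_topologicalClosure _ (LinearMap.mem_range_self _ y)
  haveI : CompleteSpace K :=
    (LinearMap.range (P : H →ₗ[ℂ] H)).isClosed_topologicalClosure.completeSpace_coe
  obtain ⟨w0, b0, hb0⟩ := exists_hilbertBasis ℂ K
  set s : Set H := Set.range (fun i : w0 => ((b0 i : K) : H)) with hsdef
  have hs_on : Orthonormal ℂ ((↑) : s → H) :=
    (b0.orthonormal.comp_linearIsometry K.subtypeₗᵢ).toSubtypeRange
  obtain ⟨w, b, hsw, hbw⟩ := hs_on.exists_hilbertBasis_extension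
  -- N vanishes on K
  have hNK : ∀ x ∈ K, N x = 0 := by
    intro x hx
    have hle : K ≤ LinearMap.ker (N : H →ₗ[ℂ] H) := by
      rw [hKdef]
      refine Submodule.topologicalClosure_minimal _ ?_ (ContinuousLinearMap.isClosed_ker N)
      rintro _ ⟨y, rfl⟩
      simp only [LinearMap.mem_ker]
      have h0 : N (P y) = (N * P) y := rfl
      rw [ContinuousLinearMap.coe_coe, ContinuousLinearMap.coe_coe, h0, hNP, ContinuousLinearMap.zero_apply]
    exact hle hx
  -- inner products with elements of K vanish for vectors orthogonal to s
  have hKv : ∀ v : H, (∀ u ∈ s, ⟪v, u⟫ = 0) → ∀ x : K, ⟪v, (x : H)⟫ = 0 := by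
    intro v hv x
    have h := (b0.hasSum_repr x).mapL (innerSL ℂ v ∘L K.subtypeL)
    have hz : (fun i => (innerSL ℂ v ∘L K.subtypeL) (b0.repr x i • b0 i)) = fun _ => (0 : ℂ) := by
      funext i
      simp only [_root_.map_smul, ContinuousLinearMap.comp_apply, Submodule.subtypeL_apply,
        innerSL_apply_apply, smul_eq_mul]
      rw [hv _ ⟨i, rfl⟩, mul_zero]
    rw [hz] at h
    simpa using h.unique hasSum_zero
  -- P vanishes on vectors orthogonal to s
  have hPperp : ∀ v : H, (∀ u ∈ s, ⟪v, u⟫ = 0) → P v = 0 := by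
    intro v hv
    have h1 := ContinuousLinearMap.adjoint_inner_left P (P v) v
    rw [hPsa.adjoint_eq] at h1
    rw [← inner_self_eq_zero (𝕜 := ℂ), h1]
    exact hKv v hv ⟨P (P v), hPK _⟩
  -- pointwise bound on the extended basis
  have hptw : ∀ v : w, ‖R (b v)‖ ^ 2 ≤ ‖⟪b v, S (b v)⟫‖ := by
    intro v
    have hRRapp : ∀ y : H, ⟪y, P y⟫ = ((‖R y‖ ^ 2 : ℝ) : ℂ) := by
      intro y
      have h3 : P y = R (R y) := by rw [← hRR]; rfl
      have h2 := ContinuousLinearMap.adjoint_inner_left R (R y) y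
      rw [hRsa.adjoint_eq] at h2
      rw [h3, ← h2, inner_self_eq_norm_sq_to_K]
      norm_cast
    by_cases hv : (b v : H) ∈ s
    · -- b v ∈ K, so N (b v) = 0 and the diagonal entry is exactly ‖R (b v)‖²
      have hbvK : (b v : H) ∈ K := by
        obtain ⟨i, hi⟩ := hv
        rw [← hi]; exact (b0 i).2
      have hSv : S (b v) = P (b v) := by
        rw [hSPN]
        simp [hNK _ hbvK]
      rw [hSv, hRRapp (b v), Complex.norm_real, Real.norm_eq_abs,
        abs_of_nonneg (sq_nonneg _)]
    · -- b v ⊥ s, so P (b v) = 0 and R (b v) = 0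
      have hperp : ∀ u ∈ s, ⟪b v, u⟫ = 0 := by
        intro u hu
        have hne : v ≠ (⟨u, hsw hu⟩ : w) := by
          intro hEq
          apply hv
          rw [hbw]
          show ((v : H)) ∈ s
          rw [hEq]
          exact hu
        have h4 := b.orthonormal.2 hne
        rw [hbw] at h4 ⊢
        exact h4
      have hP0 : P (b v) = 0 := hPperp _ hperp
      have hR0 : ‖R (b v)‖ ^ 2 = 0 := by
        have := hRRapp (b v)
        rw [hP0, inner_zero_right] at this
        exact_mod_cast this.symm
      rw [hR0]
      exact norm_nonneg _
  refine ⟨R, hRsa, hRR, w, b, ?_⟩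
  exact Summable.of_nonneg_of_le (fun v => sq_nonneg _) hptw (hT w b)

lemma IsTraceClass.add' {T U : H →L[ℂ] H} (hT : IsTraceClass T) (hU : IsTraceClass U) :
    IsTraceClass (T + U) := by
  intro ι e
  refine Summable.of_nonneg_of_le (fun i => norm_nonneg _) (fun i => ?_) ((hT ι e).add (hU ι e))
  simp only [ContinuousLinearMap.add_apply, inner_add_right]
  exact norm_add_le _ _

lemma IsTraceClass.neg' {T : H →L[ℂ] H} (hT : IsTraceClass T) : IsTraceClass (-T) := by
  intro ι e
  simp only [ContinuousLinearMap.neg_apply, inner_neg_right, norm_neg]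
  exact hT ι e

lemma IsTraceClass.sub' {T U : H →L[ℂ] H} (hT : IsTraceClass T) (hU : IsTraceClass U) :
    IsTraceClass (T - U) := by
  rw [sub_eq_add_neg]; exact hT.add' hU.neg'

lemma IsTraceClass.smul' (c : ℂ) {T : H →L[ℂ] H} (hT : IsTraceClass T) :
    IsTraceClass (c • T) := by
  intro ι e
  simp only [ContinuousLinearMap.smul_apply, inner_smul_right, norm_mul]
  exact (hT ι e).mul_left ‖c‖

lemma IsTraceClass.star' {T : H →L[ℂ] H} (hT : IsTraceClass T) : IsTraceClass (star T) := by
  intro ι e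
  refine (hT ι e).congr fun i => ?_
  have h1 : ⟪e i, (star T) (e i)⟫ = (starRingEnd ℂ) ⟪e i, T (e i)⟫ := by
    have h2 : (star T) (e i) = (ContinuousLinearMap.adjoint T) (e i) := rfl
    rw [h2, ContinuousLinearMap.adjoint_inner_right, ← inner_conj_symm (T (e i)) (e i)]
  rw [h1, RCLike.norm_conj]

open ContinuousLinearMap in
lemma isTraceClass_mul_sq_mul {R : H →L[ℂ] H} (hR : IsSelfAdjoint R)
    {κ : Type} (f : HilbertBasis κ ℂ H) (hf : Summable fun j => ‖R (f j)‖ ^ 2)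
    (X Y : H →L[ℂ] H) : IsTraceClass (X * (R * R) * Y) := by
  intro ι e
  have hx : Summable fun i => ‖R ((ContinuousLinearMap.adjoint X) (e i))‖ ^ 2 :=
    hs_transfer hR f hf _ e
  have hy : Summable fun i => ‖R (Y (e i))‖ ^ 2 := hs_transfer hR f hf Y e
  refine Summable.of_nonneg_of_le (fun i => norm_nonneg _) (fun i => ?_)
    (((hx.add hy)).mul_left (1 / 2 : ℝ))
  have key : ⟪e i, (X * (R * R) * Y) (e i)⟫
      = ⟪R ((ContinuousLinearMap.adjoint X) (e i)), R (Y (e i))⟫ := by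
    have h1 : (X * (R * R) * Y) (e i) = X (R (R (Y (e i)))) := rfl
    rw [h1, ← ContinuousLinearMap.adjoint_inner_left X (R (R (Y (e i)))) (e i)]
    have h2 := ContinuousLinearMap.adjoint_inner_left R (R (Y (e i)))
      ((ContinuousLinearMap.adjoint X) (e i))
    rw [hR.adjoint_eq] at h2
    exact h2.symm
  rw [key]
  have h3 := norm_inner_le_norm (𝕜 := ℂ) (R ((ContinuousLinearMap.adjoint X) (e i))) (R (Y (e i)))
  nlinarith [sq_nonneg (‖R ((ContinuousLinearMap.adjoint X) (e i))‖ - ‖R (Y (e i))‖),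
    norm_nonneg (R ((ContinuousLinearMap.adjoint X) (e i))), norm_nonneg (R (Y (e i)))]

lemma posPart_sub_posPart_neg {S : H →L[ℂ] H} (hS : IsSelfAdjoint S) :
    cfc (fun x : ℝ => max x 0) S - cfc (fun x : ℝ => max x 0) (-S) = S := by
  have h1 : cfc (fun x : ℝ => max x 0) (-S) = cfc (fun x : ℝ => max (-x) 0) S := by
    rw [show (fun x : ℝ => max (-x) 0) = (fun x : ℝ => max x 0) ∘ (fun x : ℝ => -(_root_.id x))
        from rfl,
      cfc_comp (fun x : ℝ => max x 0) (fun x : ℝ => -(_root_.id x)) S hS (by fun_prop) (by fun_prop),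
      cfc_neg (_root_.id : ℝ → ℝ) S, cfc_id ℝ S]
  rw [h1, ← cfc_sub (fun x : ℝ => max x 0) (fun x : ℝ => max (-x) 0) S (by fun_prop) (by fun_prop)]
  calc cfc (fun x : ℝ => max x 0 - max (-x) 0) S = cfc (fun x : ℝ => x) S := by
        refine cfc_congr fun x _ => ?_
        simp only [max_def]; split_ifs <;> linarith
    _ = S := cfc_id' ℝ S

/-- The key structural lemma: a self-adjoint trace class operator is a difference of
two squares of self-adjoint operators, each Hilbert-Schmidt. -/
lemma sq_decomposition {S : H →L[ℂ] H} (hS : IsSelfAdjoint S) (hT : IsTraceClass S) :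
    ∃ R R' : H →L[ℂ] H, IsSelfAdjoint R ∧ IsSelfAdjoint R' ∧ S = R * R - R' * R' ∧
      (∃ (κ : Type) (f : HilbertBasis κ ℂ H), Summable fun j => ‖R (f j)‖ ^ 2) ∧
      (∃ (κ : Type) (f : HilbertBasis κ ℂ H), Summable fun j => ‖R' (f j)‖ ^ 2) := by
  obtain ⟨R, hRsa, hRR, hRhs⟩ := exists_sqrt_posPart hS hT
  obtain ⟨R', hR'sa, hR'R', hR'hs⟩ := exists_sqrt_posPart hS.neg hT.neg'
  exact ⟨R, R', hRsa, hR'sa, by rw [hRR, hR'R', posPart_sub_posPart_neg hS], hRhs, hR'hs⟩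

open ContinuousLinearMap in
lemma isTraceClass_mul_mul {C : H →L[ℂ] H} (hC : IsTraceClass C) (X Y : H →L[ℂ] H) :
    IsTraceClass (X * C * Y) := by
  set Sre : H →L[ℂ] H := (2⁻¹ : ℂ) • (C + star C) with hSre
  set Sim : H →L[ℂ] H := (-(Complex.I) * 2⁻¹) • (C - star C) with hSim
  have hCre : IsSelfAdjoint Sre := by
    rw [IsSelfAdjoint, hSre, star_smul, star_add, star_star]
    rw [show (star (2⁻¹ : ℂ)) = (2⁻¹ : ℂ) by simp, add_comm]
  have hCim : IsSelfAdjoint Sim := by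
    rw [IsSelfAdjoint, hSim, star_smul, star_sub, star_star]
    rw [show (star (-(Complex.I) * 2⁻¹)) = Complex.I * 2⁻¹ by simp]
    rw [show (star C - C) = -(C - star C) from (neg_sub C (star C)).symm, smul_neg, ← neg_smul,
      neg_mul]
  have hdecomp : C = Sre + Complex.I • Sim := by
    rw [hSre, hSim, smul_smul]
    rw [show Complex.I * (-(Complex.I) * 2⁻¹) = (2⁻¹ : ℂ) by
      rw [← mul_assoc, mul_neg, Complex.I_mul_I]; norm_num]
    rw [← smul_add]
    rw [show C + star C + (C - star C) = (2 : ℂ) • C by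
      rw [two_smul]; abel]
    rw [smul_smul]
    norm_num
  have hre : IsTraceClass Sre := (hC.add' hC.star').smul' _
  have him : IsTraceClass Sim := (hC.sub' hC.star').smul' _
  obtain ⟨R1, R2, h1sa, h2sa, hre_eq, ⟨κ1, f1, hf1⟩, ⟨κ2, f2, hf2⟩⟩ := sq_decomposition hCre hre
  obtain ⟨R3, R4, h3sa, h4sa, him_eq, ⟨κ3, f3, hf3⟩, ⟨κ4, f4, hf4⟩⟩ := sq_decomposition hCim him
  have hXCY : X * C * Y = (X * (R1 * R1) * Y - X * (R2 * R2) * Y)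
      + Complex.I • (X * (R3 * R3) * Y - X * (R4 * R4) * Y) := by
    rw [hdecomp, hre_eq, him_eq]
    simp only [mul_add, add_mul, mul_sub, sub_mul, smul_mul_assoc, mul_smul_comm]
  rw [hXCY]
  exact ((isTraceClass_mul_sq_mul h1sa f1 hf1 X Y).sub'
    (isTraceClass_mul_sq_mul h2sa f2 hf2 X Y)).add'
    (((isTraceClass_mul_sq_mul h3sa f3 hf3 X Y).sub'
      (isTraceClass_mul_sq_mul h4sa f4 hf4 X Y)).smul' _)

lemma IsTraceClass.zero' : IsTraceClass (0 : H →L[ℂ] H) := by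
  intro ι e
  simp only [ContinuousLinearMap.zero_apply, inner_zero_right, norm_zero]
  exact summable_zero

lemma IsTraceClass.finsum {α : Type} [DecidableEq α] (s : Finset α) (f : α → (H →L[ℂ] H))
    (h : ∀ a ∈ s, IsTraceClass (f a)) : IsTraceClass (∑ a ∈ s, f a) := by
  induction s using Finset.induction_on with
  | empty => simpa using IsTraceClass.zero'
  | @insert a s hx ih =>
    rw [Finset.sum_insert hx]
    exact (h _ (Finset.mem_insert_self _ _)).add' (ih fun b hb => h b (Finset.mem_insert_of_mem hb))

lemma telescope {M : Type} [Ring M] (x y : M) (n : ℕ) :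
    x ^ n - y ^ n = ∑ k ∈ Finset.range n, y ^ k * (x - y) * x ^ (n - 1 - k) := by
  induction n with
  | zero => simp
  | succ n ih =>
    rw [Finset.sum_range_succ']
    have h1 : ∀ k, y ^ (k + 1) * (x - y) * x ^ (n + 1 - 1 - (k + 1))
        = y * (y ^ k * (x - y) * x ^ (n - 1 - k)) := by
      intro k
      have h2 : n + 1 - 1 - (k + 1) = n - 1 - k := by omega
      rw [h2, pow_succ']
      simp only [mul_assoc]
    simp only [h1]
    rw [← Finset.mul_sum, ← ih, pow_zero, one_mul]
    have h3 : n + 1 - 1 - 0 = n := by omega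
    rw [h3, pow_succ' x, pow_succ' y, mul_sub, sub_mul]
    abel

lemma pow_mul_comm_A (A B : H →L[ℂ] H) : ∀ m : ℕ, (A * B) ^ (m + 1) = A * (B * A) ^ m * B
  | 0 => by simp
  | (m + 1) => by
    rw [pow_succ, pow_mul_comm_A A B m, pow_succ]
    simp only [mul_assoc]

lemma pow_mul_comm_B (A B : H →L[ℂ] H) (m : ℕ) : (B * A) ^ (m + 1) = B * (A * (B * A) ^ m) := by
  rw [pow_succ']
  simp only [mul_assoc]

end
end Aux

/-- If `[A,B]` is trace class then for every `n ≥ 1` the operator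
`(AB)ⁿ − (BA)ⁿ` is trace class, it agrees with the commutator
`[A(BA)^{n−1}, B]` modulo operators of trace zero, and in particular
`Tr((AB)ⁿ − (BA)ⁿ) = Tr[A(BA)^{n−1}, B]`. -/
theorem trace_power_commutator [CompleteSpace H]
    (A B : H →L[ℂ] H) (h : IsTraceClass (A * B - B * A)) (n : ℕ) (hn : 1 ≤ n) :
    IsTraceClass ((A * B) ^ n - (B * A) ^ n) ∧
    IsTraceClass ((A * (B * A) ^ (n - 1)) * B - B * (A * (B * A) ^ (n - 1))) ∧
    (∀ (ι : Type) (e : HilbertBasis ι ℂ H),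
      HasSum (fun i => (inner ℂ (e i)
        ((((A * B) ^ n - (B * A) ^ n) -
          ((A * (B * A) ^ (n - 1)) * B - B * (A * (B * A) ^ (n - 1)))) (e i)) : ℂ)) 0) ∧
    ∀ (ι : Type) (e : HilbertBasis ι ℂ H),
      ∑' i, (inner ℂ (e i) (((A * B) ^ n - (B * A) ^ n) (e i)) : ℂ) =
      ∑' i, (inner ℂ (e i)
        (((A * (B * A) ^ (n - 1)) * B - B * (A * (B * A) ^ (n - 1))) (e i)) : ℂ) := by
  obtain ⟨m, rfl⟩ : ∃ m, n = m + 1 := ⟨n - 1, (Nat.succ_pred_eq_of_pos hn).symm⟩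
  have hsub : m + 1 - 1 = m := by omega
  have hops : (A * B) ^ (m + 1) - (B * A) ^ (m + 1)
      = (A * (B * A) ^ m) * B - B * (A * (B * A) ^ m) := by
    rw [pow_mul_comm_A A B m, pow_mul_comm_B A B m]
  have hops' : (A * B) ^ (m + 1) - (B * A) ^ (m + 1)
      = (A * (B * A) ^ (m + 1 - 1)) * B - B * (A * (B * A) ^ (m + 1 - 1)) := by
    rw [hsub]; exact hops
  have h1 : IsTraceClass ((A * B) ^ (m + 1) - (B * A) ^ (m + 1)) := by
    rw [telescope (A * B) (B * A) (m + 1)]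
    classical
    refine IsTraceClass.finsum _ _ fun k _ => ?_
    exact isTraceClass_mul_mul h ((B * A) ^ k) ((A * B) ^ (m + 1 - 1 - k))
  have hzero : (((A * B) ^ (m + 1) - (B * A) ^ (m + 1)) -
      ((A * (B * A) ^ (m + 1 - 1)) * B - B * (A * (B * A) ^ (m + 1 - 1)))) = 0 := by
    rw [← hops', sub_self]
  refine ⟨h1, ?_, ?_, ?_⟩
  · rw [← hops']; exact h1
  · intro ι e
    simp only [hzero, ContinuousLinearMap.zero_apply, inner_zero_right]
    exact hasSum_zero
  · intro ι e
    rw [hops']
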